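/- Let n be a finite nonempty index type, let 𝒱 ⊆ (n → ℝ) be a nonempty set of achievable value vectors, let μ : n → ℝ be the start-state distribution vector, and let M : Matrix n n ℝ be a positive semidefinite matrix (the prediction-error quadratic form). Let 0 ≤ β₁ < β₂. If v₁ ∈ 𝒱 maximizes v ↦ μ ⬝ᵥ v − β₁·(v ⬝ᵥ (M *ᵥ v)) over 𝒱 and v₂ ∈ 𝒱 maximizes v ↦ μ ⬝ᵥ v − β₂·(v ⬝ᵥ (M *ᵥ v)) over 𝒱, then both μ ⬝ᵥ v₂ ≤ μ ⬝ᵥ v₁ and v₂ ⬝ᵥ (M *ᵥ v₂) ≤ v₁ ⬝ᵥ (M *ᵥ v₁). That is, increasing the predictability coefficient β in soft EvA-RL monotonically decreases both the expected return and the squared evaluation error of the resulting solution. -/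

import Mathlib

open Matrix

/-- Increasing the predictability coefficient `β` in soft EvA-RL monotonically
decreases both the expected return `μ ⬝ᵥ v` and the squared evaluation error
`v ⬝ᵥ (M *ᵥ v)` of the resulting solution. -/
theorem evaRL_monotonicity
    {n : Type*} [Fintype n] [Nonempty n]
    (𝒱 : Set (n → ℝ)) (h𝒱 : 𝒱.Nonempty)
    (μ : n → ℝ) (M : Matrix n n ℝ) (hM : M.PosSemidef)
    (β₁ β₂ : ℝ) (hβ₁ : 0 ≤ β₁) (hβ : β₁ < β₂)
    (v₁ v₂ : n → ℝ) (hv₁ : v₁ ∈ 𝒱) (hv₂ : v₂ ∈ 𝒱)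
    (hmax₁ : ∀ v ∈ 𝒱, μ ⬝ᵥ v - β₁ * (v ⬝ᵥ (M *ᵥ v)) ≤ μ ⬝ᵥ v₁ - β₁ * (v₁ ⬝ᵥ (M *ᵥ v₁)))
    (hmax₂ : ∀ v ∈ 𝒱, μ ⬝ᵥ v - β₂ * (v ⬝ᵥ (M *ᵥ v)) ≤ μ ⬝ᵥ v₂ - β₂ * (v₂ ⬝ᵥ (M *ᵥ v₂))) :
    μ ⬝ᵥ v₂ ≤ μ ⬝ᵥ v₁ ∧ v₂ ⬝ᵥ (M *ᵥ v₂) ≤ v₁ ⬝ᵥ (M *ᵥ v₁) := by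
  have h1 := hmax₁ v₂ hv₂
  have h2 := hmax₂ v₁ hv₁
  constructor <;> nlinarith [(by have := hM.dotProduct_mulVec_nonneg v₁; rwa [star_trivial] at this : 0 ≤ v₁ ⬝ᵥ (M *ᵥ v₁)), (by have := hM.dotProduct_mulVec_nonneg v₂; rwa [star_trivial] at this : 0 ≤ v₂ ⬝ᵥ (M *ᵥ v₂))]
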